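/- Compactness for lattice-based propositional logic: let Γ ∪ {φ₀} be a set of 𝓛-formulas such that for every finite Γ' ⊆ Γ there exist a polarity-based model M' and an object a' of M' with M',a' ⊩ γ for all γ ∈ Γ' and M',a' ⊮ φ₀. Then there exist a polarity-based model M and an object a of M with M,a ⊩ γ for all γ ∈ Γ and M,a ⊮ φ₀. The analogous statement holds for features and the co-satisfaction relation ≻. -/

import Mathlib

namespace DR

/-- Formulas of the lattice-based language 𝓛: variables, ⊥, ⊤, ∧, ∨. -/
inductive Fm : Type where
  | var : ℕ → Fm
  | bot : Fm
  | top : Fm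
  | and : Fm → Fm → Fm
  | or  : Fm → Fm → Fm

/-- A polarity (formal context) (A, X, I). -/
structure Polarity : Type 1 where
  Obj : Type
  Feat : Type
  I : Obj → Feat → Prop

namespace Polarity

variable (P : Polarity)

def up (B : Set P.Obj) : Set P.Feat := {x | ∀ b ∈ B, P.I b x}
def dn (Y : Set P.Feat) : Set P.Obj := {a | ∀ y ∈ Y, P.I a y}

lemma subset_dn_up (B : Set P.Obj) : B ⊆ P.dn (P.up B) :=
  fun _ ha _ hx => hx _ ha

lemma subset_up_dn (Y : Set P.Feat) : Y ⊆ P.up (P.dn Y) :=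
  fun _ hx _ ha => ha _ hx

lemma up_anti {B C : Set P.Obj} (h : B ⊆ C) : P.up C ⊆ P.up B :=
  fun _ hx b hb => hx b (h hb)

lemma dn_anti {Y Z : Set P.Feat} (h : Y ⊆ Z) : P.dn Z ⊆ P.dn Y :=
  fun _ ha y hy => ha y (h hy)

end Polarity

/-- A formal concept of a polarity: a Galois-stable pair (extension, intension). -/
structure Concept (P : Polarity) : Type where
  ext : Set P.Obj
  int : Set P.Feat
  up_ext : P.up ext = int
  dn_int : P.dn int = ext

namespace Concept

variable {P : Polarity}

/-- Lattice meet of concepts: extensions intersect. -/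
def meet (c d : Concept P) : Concept P where
  ext := c.ext ∩ d.ext
  int := P.up (c.ext ∩ d.ext)
  up_ext := rfl
  dn_int := by
    apply Set.Subset.antisymm
    · intro a ha
      constructor
      · rw [← c.dn_int]
        intro y hy
        apply ha
        rw [← c.up_ext] at hy
        exact P.up_anti Set.inter_subset_left hy
      · rw [← d.dn_int]
        intro y hy
        apply ha
        rw [← d.up_ext] at hy
        exact P.up_anti Set.inter_subset_right hy
    · exact P.subset_dn_up _

/-- Lattice join of concepts: intensions intersect. -/
def join (c d : Concept P) : Concept P where
  ext := P.dn (c.int ∩ d.int)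
  int := c.int ∩ d.int
  up_ext := by
    apply Set.Subset.antisymm
    · intro x hx
      constructor
      · rw [← c.up_ext]
        intro b hb
        apply hx
        rw [← c.dn_int] at hb
        exact P.dn_anti Set.inter_subset_left hb
      · rw [← d.up_ext]
        intro b hb
        apply hx
        rw [← d.dn_int] at hb
        exact P.dn_anti Set.inter_subset_right hb
    · exact P.subset_up_dn _
  dn_int := rfl

/-- The greatest concept. -/
def top (P : Polarity) : Concept P where
  ext := Set.univ
  int := P.up Set.univ
  up_ext := rfl
  dn_int := Set.eq_univ_of_univ_subset (P.subset_dn_up _)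

/-- The least concept. -/
def bot (P : Polarity) : Concept P where
  ext := P.dn Set.univ
  int := Set.univ
  up_ext := Set.eq_univ_of_univ_subset (P.subset_up_dn _)
  dn_int := rfl

end Concept

/-- A polarity-based model: a polarity with a valuation of variables into concepts. -/
structure Model : Type 1 where
  P : Polarity
  V : ℕ → Concept P

namespace Model

/-- Homomorphic extension of the valuation to all formulas. -/
def interp (M : Model) : Fm → Concept M.P
  | .var n => M.V n
  | .bot => Concept.bot M.P
  | .top => Concept.top M.P
  | .and φ ψ => Concept.meet (M.interp φ) (M.interp ψ)
  | .or φ ψ => Concept.join (M.interp φ) (M.interp ψ)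

/-- M, a ⊩ φ : the object a is in the extension of φ. -/
def objSat (M : Model) (a : M.P.Obj) (φ : Fm) : Prop := a ∈ (M.interp φ).ext

/-- M, x ≻ φ : the feature x is in the intension of φ. -/
def featSat (M : Model) (x : M.P.Feat) (φ : Fm) : Prop := x ∈ (M.interp φ).int

end Model

/-- Validity of the sequent φ ⊢ ψ: in every polarity-based model the
extension of φ is contained in the extension of ψ. -/
def SeqValid (φ ψ : Fm) : Prop :=
  ∀ M : Model, (M.interp φ).ext ⊆ (M.interp ψ).ext

/-- A conceptual cumulative consequence relation: reflexive and closed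
under (LLE), (RW), (CM) and (Cut). -/
structure IsCumulative (R : Fm → Fm → Prop) : Prop where
  refl : ∀ φ, R φ φ
  lle : ∀ φ ψ χ, SeqValid φ ψ → SeqValid ψ φ → R φ χ → R ψ χ
  rw : ∀ φ ψ χ, SeqValid φ ψ → R χ φ → R χ ψ
  cm : ∀ φ ψ χ, R φ ψ → R φ χ → R (Fm.and φ ψ) χ
  cut : ∀ φ ψ χ, R (Fm.and φ ψ) χ → R φ ψ → R φ χ

/-- Closure under the rule (Loop). -/
def LoopClosed (R : Fm → Fm → Prop) : Prop :=
  ∀ (n : ℕ) (φ : ℕ → Fm),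
    (∀ i < n, R (φ i) (φ (i + 1))) → R (φ n) (φ 0) → R (φ 0) (φ n)

/-- A pointed polarity-based model. -/
structure PointedModel : Type 1 where
  M : Model
  pt : M.P.Obj

/-- Satisfaction at a pointed model. -/
def PointedModel.sat (Ma : PointedModel) (φ : Fm) : Prop := Ma.M.objSat Ma.pt φ

/-- A pointed model is normal for φ iff it satisfies every plausible consequence of φ. -/
def NormalFor (R : Fm → Fm → Prop) (Ma : PointedModel) (φ : Fm) : Prop :=
  ∀ ψ, R φ ψ → Ma.sat ψ

/-- A pointed model is supernormal for φ. -/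
def SupernormalFor (R : Fm → Fm → Prop) (Ma : PointedModel) (φ : Fm) : Prop :=
  ∀ ψ, R φ ψ ↔ Ma.sat ψ

/-- A frame (S, l, ≺): states labelled by sets of pointed polarity-based
models with a preference relation. -/
structure Frame : Type 2 where
  S : Type
  l : S → Set PointedModel
  prec : S → S → Prop

/-- t is minimal in P (w.r.t. prec). -/
def MinimalIn {α : Type _} (prec : α → α → Prop) (P : Set α) (t : α) : Prop :=
  t ∈ P ∧ ∀ s ∈ P, ¬ prec s t

/-- t is a minimum of P (w.r.t. prec). -/
def IsMinimum {α : Type _} (prec : α → α → Prop) (P : Set α) (t : α) : Prop :=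
  t ∈ P ∧ ∀ s ∈ P, s ≠ t → prec t s

/-- P is smooth (w.r.t. prec). -/
def Smooth {α : Type _} (prec : α → α → Prop) (P : Set α) : Prop :=
  ∀ t ∈ P, MinimalIn prec P t ∨ ∃ s, MinimalIn prec P s ∧ prec s t

namespace Frame

/-- s ⊨ φ : every pointed model in l(s) satisfies φ. -/
def stateSat (F : Frame) (s : F.S) (φ : Fm) : Prop :=
  ∀ Ma ∈ F.l s, Ma.sat φ

/-- φ̂ : the set of states satisfying φ. -/
def hat (F : Frame) (φ : Fm) : Set F.S := {s | F.stateSat s φ}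

/-- A conceptual cumulative model: φ̂ is smooth for every φ. -/
def IsCumulativeModel (F : Frame) : Prop :=
  ∀ φ : Fm, Smooth F.prec (F.hat φ)

/-- The consequence relation |~_𝓜 defined by a frame: every state minimal
in φ̂ belongs to ψ̂. -/
def conseq (F : Frame) (φ ψ : Fm) : Prop :=
  ∀ s, MinimalIn F.prec (F.hat φ) s → s ∈ F.hat ψ

/-- Replace the preference relation of a frame. -/
def withPrec (F : Frame) (p : F.S → F.S → Prop) : Frame := ⟨F.S, F.l, p⟩

end Frame

/-- The equivalence class φ/∼ of φ under ∼ (φ ∼ ψ iff φ |~ ψ and ψ |~ φ). -/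
def cls (R : Fm → Fm → Prop) (φ : Fm) : Set Fm := {ψ | R φ ψ ∧ R ψ φ}

/-- φ/∼ ≤ ψ/∼ : there is χ ∈ φ/∼ with ψ |~ χ (ψ any representative of ψ/∼). -/
def clsLE (R : Fm → Fm → Prop) (C D : Set Fm) : Prop :=
  ∃ χ ∈ C, ∃ ψ ∈ D, R ψ χ

/-- The canonical model of a consequence relation: states are the
equivalence classes φ/∼, labelled by the normal pointed models for φ,
with φ/∼ ≺ ψ/∼ iff φ/∼ ≤ ψ/∼ and φ/∼ ≠ ψ/∼. -/
def canonicalFrame (R : Fm → Fm → Prop) : Frame where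
  S := {C : Set Fm // ∃ φ, C = cls R φ}
  l := fun s => {Ma | ∃ φ, s.val = cls R φ ∧ NormalFor R Ma φ}
  prec := fun s t => clsLE R s.val t.val ∧ s ≠ t

/-- The state φ/∼ of the canonical model. -/
def canonicalState (R : Fm → Fm → Prop) (φ : Fm) : (canonicalFrame R).S :=
  ⟨cls R φ, φ, rfl⟩


/-! ### Auxiliary material for compactness -/

lemma Concept.ext_inj' {P : Polarity} {c d : Concept P} (h : c.ext = d.ext) : c = d := by
  obtain ⟨e, i, hu, hd⟩ := c
  obtain ⟨e', i', hu', hd'⟩ := d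
  subst h
  cases hu; cases hu'
  rfl

lemma sv_refl (φ : Fm) : SeqValid φ φ := fun _ => le_refl _

lemma sv_trans {φ ψ χ : Fm} (h₁ : SeqValid φ ψ) (h₂ : SeqValid ψ χ) : SeqValid φ χ :=
  fun M => (h₁ M).trans (h₂ M)

lemma sv_top (φ : Fm) : SeqValid φ Fm.top := fun _ _ _ => trivial

lemma sv_bot (φ : Fm) : SeqValid Fm.bot φ := by
  intro M a ha
  rw [← (M.interp φ).dn_int]
  exact fun y _ => ha y trivial

lemma sv_and_intro {φ ψ χ : Fm} (h₁ : SeqValid φ ψ) (h₂ : SeqValid φ χ) :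
    SeqValid φ (ψ.and χ) := fun M a ha => ⟨h₁ M ha, h₂ M ha⟩

lemma sv_and_left (φ ψ : Fm) : SeqValid (φ.and ψ) φ := fun _ _ ha => ha.1

lemma sv_and_right (φ ψ : Fm) : SeqValid (φ.and ψ) ψ := fun _ _ ha => ha.2

/-- Intensions are antitone in extensions. -/
lemma int_anti {P : Polarity} {c d : Concept P} (h : c.ext ⊆ d.ext) : d.int ⊆ c.int := by
  rw [← c.up_ext, ← d.up_ext]
  exact P.up_anti h

lemma sv_or_left (φ ψ : Fm) : SeqValid φ (φ.or ψ) := by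
  intro M a ha y hy
  have := hy.1
  rw [← (M.interp φ).up_ext] at this
  exact this a ha

lemma sv_or_right (φ ψ : Fm) : SeqValid ψ (φ.or ψ) := by
  intro M a ha y hy
  have := hy.2
  rw [← (M.interp ψ).up_ext] at this
  exact this a ha

lemma sv_or_elim {φ ψ χ : Fm} (h₁ : SeqValid φ χ) (h₂ : SeqValid ψ χ) :
    SeqValid (φ.or ψ) χ := by
  intro M a ha
  rw [← (M.interp χ).dn_int]
  intro y hy
  exact ha y ⟨int_anti (h₁ M) hy, int_anti (h₂ M) hy⟩

/-- Filters of formulas w.r.t. semantic consequence. -/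
def IsFlt (F : Set Fm) : Prop :=
  Fm.top ∈ F ∧ (∀ φ ψ, φ ∈ F → ψ ∈ F → Fm.and φ ψ ∈ F) ∧
    (∀ φ ψ, φ ∈ F → SeqValid φ ψ → ψ ∈ F)

/-- The principal filter of a formula is a filter. -/
lemma principal_isFlt (φ : Fm) : IsFlt {ψ | SeqValid φ ψ} :=
  ⟨sv_top φ, fun _ _ h₁ h₂ => sv_and_intro h₁ h₂, fun _ _ h₁ h₂ => sv_trans h₁ h₂⟩

/-- The canonical polarity: objects are filters, features are formulas. -/
def canonP : Polarity := ⟨{F : Set Fm // IsFlt F}, Fm, fun F ψ => ψ ∈ F.val⟩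

/-- The canonical concept of a formula. -/
def canonC (φ : Fm) : Concept canonP where
  ext := {F | φ ∈ F.val}
  int := {ψ | SeqValid φ ψ}
  up_ext := by
    apply Set.Subset.antisymm
    · intro ψ hψ
      exact hψ ⟨{χ | SeqValid φ χ}, principal_isFlt φ⟩ (sv_refl φ)
    · intro ψ hψ F hF
      exact F.property.2.2 φ ψ hF hψ
  dn_int := by
    apply Set.Subset.antisymm
    · intro F hF
      exact hF φ (sv_refl φ)
    · intro F hF ψ hψ
      exact F.property.2.2 φ ψ hF hψ

/-- The canonical model. -/
def canonM : Model := ⟨canonP, fun n => canonC (.var n)⟩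

lemma canon_interp (φ : Fm) : canonM.interp φ = canonC φ := by
  induction φ with
  | var n => rfl
  | bot =>
    apply Concept.ext_inj'
    apply Set.Subset.antisymm
    · intro F hF
      exact hF Fm.bot trivial
    · intro F hF ψ _
      exact F.property.2.2 Fm.bot ψ hF (sv_bot ψ)
  | top =>
    apply Concept.ext_inj'
    apply Set.Subset.antisymm
    · intro F _
      exact F.property.1
    · intro F _
      trivial
  | and φ ψ ihφ ihψ =>
    apply Concept.ext_inj'
    show (Concept.meet (canonM.interp φ) (canonM.interp ψ)).ext = _
    rw [ihφ, ihψ]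
    apply Set.Subset.antisymm
    · intro F hF
      exact F.property.2.1 φ ψ hF.1 hF.2
    · intro F hF
      exact ⟨F.property.2.2 _ φ hF (sv_and_left φ ψ),
             F.property.2.2 _ ψ hF (sv_and_right φ ψ)⟩
  | or φ ψ ihφ ihψ =>
    apply Concept.ext_inj'
    show (Concept.join (canonM.interp φ) (canonM.interp ψ)).ext = _
    rw [ihφ, ihψ]
    apply Set.Subset.antisymm
    · intro F hF
      exact hF (φ.or ψ) ⟨sv_or_left φ ψ, sv_or_right φ ψ⟩
    · intro F hF χ hχ
      exact F.property.2.2 (φ.or ψ) χ hF (sv_or_elim hχ.1 hχ.2)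

/-- Conjunction of a list of formulas. -/
def conj (l : List Fm) : Fm := l.foldr Fm.and Fm.top

lemma conj_sat (M : Model) (a : M.P.Obj) :
    ∀ l : List Fm, a ∈ (M.interp (conj l)).ext ↔ ∀ γ ∈ l, a ∈ (M.interp γ).ext := by
  intro l
  induction l with
  | nil => simp [conj, Model.interp, Concept.top]
  | cons γ l ih =>
    constructor
    · intro h δ hδ
      rcases List.mem_cons.mp hδ with h' | h'
      · subst h'; exact h.1
      · exact ih.mp h.2 δ h'
    · intro h
      exact ⟨h γ List.mem_cons_self, ih.mpr fun δ hδ => h δ (List.mem_cons_of_mem _ hδ)⟩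

/-- Object-side compactness. -/
lemma compactness_obj (Γ : Set Fm) (φ₀ : Fm)
    (h : ∀ Γ' : Set Fm, Γ'.Finite → Γ' ⊆ Γ →
      ∃ (M : Model) (a : M.P.Obj), (∀ γ ∈ Γ', M.objSat a γ) ∧ ¬ M.objSat a φ₀) :
    ∃ (M : Model) (a : M.P.Obj), (∀ γ ∈ Γ, M.objSat a γ) ∧ ¬ M.objSat a φ₀ := by
  set FΓ : Set Fm := {ψ | ∃ l : List Fm, (∀ γ ∈ l, γ ∈ Γ) ∧ SeqValid (conj l) ψ} with hFΓ
  have hflt : IsFlt FΓ := by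
    refine ⟨⟨[], by simp, sv_refl _⟩, ?_, ?_⟩
    · rintro φ ψ ⟨l₁, hl₁, hs₁⟩ ⟨l₂, hl₂, hs₂⟩
      refine ⟨l₁ ++ l₂, ?_, ?_⟩
      · intro γ hγ
        rcases List.mem_append.mp hγ with h' | h'
        · exact hl₁ γ h'
        · exact hl₂ γ h'
      · intro M a ha
        have hall := (conj_sat M a (l₁ ++ l₂)).mp ha
        have h₁ : a ∈ (M.interp (conj l₁)).ext :=
          (conj_sat M a l₁).mpr fun γ hγ => hall γ (List.mem_append_left _ hγ)
        have h₂ : a ∈ (M.interp (conj l₂)).ext :=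
          (conj_sat M a l₂).mpr fun γ hγ => hall γ (List.mem_append_right _ hγ)
        exact ⟨hs₁ M h₁, hs₂ M h₂⟩
    · rintro φ ψ ⟨l, hl, hs⟩ hsv
      exact ⟨l, hl, sv_trans hs hsv⟩
  refine ⟨canonM, ⟨FΓ, hflt⟩, ?_, ?_⟩
  · intro γ hγ
    show _ ∈ (canonM.interp γ).ext
    rw [canon_interp]
    exact ⟨[γ], by simpa using hγ, sv_and_left γ Fm.top⟩
  · intro hsat
    change _ ∈ (canonM.interp φ₀).ext at hsat
    rw [canon_interp] at hsat
    obtain ⟨l, hl, hs⟩ := hsat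
    obtain ⟨M, a, hM, hM0⟩ := h {γ | γ ∈ l} (List.finite_toSet l) hl
    apply hM0
    exact hs M ((conj_sat M a l).mpr hM)

/-! ### Duality -/

/-- Dual of a formula: swap ∧/∨ and ⊤/⊥. -/
def Fm.dual : Fm → Fm
  | .var n => .var n
  | .bot => .top
  | .top => .bot
  | .and φ ψ => .or φ.dual ψ.dual
  | .or φ ψ => .and φ.dual ψ.dual

lemma Fm.dual_dual (φ : Fm) : φ.dual.dual = φ := by
  induction φ <;> simp [Fm.dual, *]

/-- Dual polarity: swap objects and features. -/
def Polarity.dual (P : Polarity) : Polarity := ⟨P.Feat, P.Obj, fun x a => P.I a x⟩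

/-- Dual concept. -/
def Concept.dual {P : Polarity} (c : Concept P) : Concept P.dual :=
  ⟨c.int, c.ext, c.dn_int, c.up_ext⟩

/-- Dual model. -/
def Model.dual (M : Model) : Model := ⟨M.P.dual, fun n => (M.V n).dual⟩

lemma interp_dual (M : Model) (φ : Fm) :
    M.dual.interp φ.dual = (M.interp φ).dual := by
  induction φ with
  | var n => rfl
  | bot => exact Concept.ext_inj' rfl
  | top => exact Concept.ext_inj' rfl
  | and φ ψ ihφ ihψ =>
    apply Concept.ext_inj'
    show (Concept.join (M.dual.interp φ.dual) (M.dual.interp ψ.dual)).ext = _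
    rw [ihφ, ihψ]
    rfl
  | or φ ψ ihφ ihψ =>
    apply Concept.ext_inj'
    show (Concept.meet (M.dual.interp φ.dual) (M.dual.interp ψ.dual)).ext = _
    rw [ihφ, ihψ]
    rfl

lemma featSat_iff_dual (M : Model) (x : M.P.Feat) (φ : Fm) :
    M.featSat x φ ↔ M.dual.objSat x φ.dual := by
  show _ ↔ _ ∈ (M.dual.interp φ.dual).ext
  rw [interp_dual]
  exact Iff.rfl

/-- compactness for lattice-based propositional logic,
for objects (⊩) and for features (≻). -/
theorem compactness_polarity :
    (∀ (Γ : Set Fm) (φ₀ : Fm),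
      (∀ Γ' : Set Fm, Γ'.Finite → Γ' ⊆ Γ →
        ∃ (M : Model) (a : M.P.Obj), (∀ γ ∈ Γ', M.objSat a γ) ∧ ¬ M.objSat a φ₀) →
      ∃ (M : Model) (a : M.P.Obj), (∀ γ ∈ Γ, M.objSat a γ) ∧ ¬ M.objSat a φ₀)
    ∧
    (∀ (Γ : Set Fm) (φ₀ : Fm),
      (∀ Γ' : Set Fm, Γ'.Finite → Γ' ⊆ Γ →
        ∃ (M : Model) (x : M.P.Feat), (∀ γ ∈ Γ', M.featSat x γ) ∧ ¬ M.featSat x φ₀) →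
      ∃ (M : Model) (x : M.P.Feat), (∀ γ ∈ Γ, M.featSat x γ) ∧ ¬ M.featSat x φ₀) := by
  constructor
  · exact compactness_obj
  · intro Γ φ₀ h
    have hfinhyp : ∀ Γ'' : Set Fm, Γ''.Finite → Γ'' ⊆ Fm.dual '' Γ →
        ∃ (M : Model) (a : M.P.Obj), (∀ γ ∈ Γ'', M.objSat a γ) ∧ ¬ M.objSat a φ₀.dual := by
      intro Γ'' hfin hsub
      have hsub' : Fm.dual '' Γ'' ⊆ Γ := by
        rintro γ ⟨δ, hδ, rfl⟩
        obtain ⟨ε, hε, hεd⟩ := hsub hδ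
        rw [← hεd, Fm.dual_dual]
        exact hε
      obtain ⟨M, x, hM, hM0⟩ := h (Fm.dual '' Γ'') (hfin.image _) hsub'
      refine ⟨M.dual, x, ?_, ?_⟩
      · intro γ hγ
        have hmem : γ.dual ∈ Fm.dual '' Γ'' := ⟨γ, hγ, rfl⟩
        have hh := (featSat_iff_dual M x γ.dual).mp (hM γ.dual hmem)
        rwa [Fm.dual_dual] at hh
      · intro hsat
        exact hM0 ((featSat_iff_dual M x φ₀).mpr hsat)
    obtain ⟨N, a, hN, hN0⟩ := compactness_obj (Fm.dual '' Γ) φ₀.dual hfinhyp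
    refine ⟨N.dual, a, ?_, ?_⟩
    · intro γ hγ
      have hns : N.objSat a γ.dual := hN γ.dual ⟨γ, hγ, rfl⟩
      exact (featSat_iff_dual N.dual a γ).mpr hns
    · intro hsat
      exact hN0 ((featSat_iff_dual N.dual a φ₀).mp hsat)

end DR
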